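/- arXiv:2506.04222 — 3 statements merged into one kernel-verified Lean document; each statement's English description precedes it below -/
import Mathlib

section
/- In the big grading group G′, for every j ∈ ℤ/4ℤ the decreasing cyclic product satisfies gr′(ρ_{j+1})·gr′(ρ_j)·gr′(ρ_{j−1})·gr′(ρ_{j−2}) = (−3; 1, 1, 1, 1), where indices are taken modulo 4. (This is the key grading identity showing that move (2), inserting the four chords ρ_{j+1}, ρ_j, ρ_{j−1}, ρ_{j−2}, drops the Maslov component of the product of gradings by three.) -/
/-- The underlying carrier of the big grading group `G'`, with the `ℤ⁴` (spin-c)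
component indexed cyclically by `ℤ/4ℤ`. -/
structure BG where
  m : ℚ
  v : ZMod 4 → ℤ

/-- The multiplication on the big grading group `G'`:
`(m; a,b,c,d)·(m′; a′,b′,c′,d′) = (m + m′ + ½(ab′−a′b) + ½(bc′−b′c) + ½(cd′−c′d) + ½(da′−d′a);
a+a′, b+b′, c+c′, d+d′)`, written with the cyclic index convention. -/
def bmul (x y : BG) : BG :=
  ⟨x.m + y.m +
      ((∑ i : ZMod 4, (x.v i * y.v (i + 1) - y.v i * x.v (i + 1)) : ℤ) : ℚ) / 2,
    x.v + y.v⟩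

/-- The grading `gr′(ρ_i) = (−½; e_i)`, where `e_i` is the `i`-th standard basis
vector of `ℤ⁴`, indices taken modulo 4. -/
def grRho (i : ZMod 4) : BG := ⟨-(1 / 2), Pi.single i 1⟩

lemma sum4 (f : ZMod 4 → ℤ) : ∑ i : ZMod 4, f i = f 0 + f 1 + f 2 + f 3 := by
  exact Fin.sum_univ_four (f := f)

/-- In the big grading group `G′`, for every `j ∈ ℤ/4ℤ` the decreasing cyclic product
satisfies `gr′(ρ_{j+1})·gr′(ρ_j)·gr′(ρ_{j−1})·gr′(ρ_{j−2}) = (−3; 1, 1, 1, 1)`,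
where indices are taken modulo 4. (Move (2), inserting the four chords
`ρ_{j+1}, ρ_j, ρ_{j−1}, ρ_{j−2}`, drops the Maslov component by three.) -/
theorem grading_of_move_two_insertion :
    ∀ j : ZMod 4,
      bmul (bmul (bmul (grRho (j + 1)) (grRho j)) (grRho (j - 1))) (grRho (j - 2)) =
        ⟨-3, fun _ => 1⟩ := by
  intro j
  rcases (by decide : ∀ j : ZMod 4, j = 0 ∨ j = 1 ∨ j = 2 ∨ j = 3) j with rfl | rfl | rfl | rfl <;>
  · refine BG.mk.injEq _ _ _ _ ▸ ⟨?_, funext fun i => ?_⟩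
    · simp (config := { decide := true }) [bmul, grRho, sum4, Pi.single_apply]
      norm_num
    · rcases (by decide : ∀ j : ZMod 4, j = 0 ∨ j = 1 ∨ j = 2 ∨ j = 3) i with rfl | rfl | rfl | rfl <;>
        simp (config := { decide := true }) only [bmul, grRho, Pi.add_apply, Pi.single_apply]
end

section
/- In the intermediate grading group G, set B_t = (½; ½, ½ − t) for integers t ≥ 1. For all integers i, j ≥ 1, every natural number k, every integer l, and every h in the three-element set {(0; 0, 0), (−½; 0, 1), (−3/2; 0, −1)}, the equation λ·B_j^{−1}·(−2k; 0, 0)·h·B_i·(½; 1, 0)^l = (0; 0, 0) holds if and only if (h = (−½; 0, 1), i = j + 1, k = 0, l = 0) or (h = (−3/2; 0, −1), i = j − 1, k = 0, l = 0). (This is the grading computation classifying the permissible differential terms between the generators b_{p−j} and b_{p−i} — and identically between c_{p−j} and c_{p−i} — of the weighted type D module CFD⁻ of the (p,1)-cable: only ρ23 ⊗ b_{p−(j+1)} and ρ41 ⊗ b_{p−(j−1)} are permitted.) -/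
/-- The underlying carrier of the intermediate grading group `G`: triples `(m; a, b)`
of rational numbers (restricted to half-integers in the membership predicate `memG`),
with multiplication `(m; a, b)·(m′; a′, b′) = (m + m′ + ab′ − a′b; a + a′, b + b′)`. -/
@[ext]
structure IGG where
  m : ℚ
  a : ℚ
  b : ℚ

namespace IGG

instance : Mul IGG :=
  ⟨fun x y => ⟨x.m + y.m + x.a * y.b - y.a * x.b, x.a + y.a, x.b + y.b⟩⟩
instance : One IGG := ⟨⟨0, 0, 0⟩⟩
instance : Inv IGG := ⟨fun x => ⟨-x.m, -x.a, -x.b⟩⟩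

@[simp] theorem mul_m (x y : IGG) : (x * y).m = x.m + y.m + x.a * y.b - y.a * x.b := rfl
@[simp] theorem mul_a (x y : IGG) : (x * y).a = x.a + y.a := rfl
@[simp] theorem mul_b (x y : IGG) : (x * y).b = x.b + y.b := rfl
@[simp] theorem one_m : (1 : IGG).m = 0 := rfl
@[simp] theorem one_a : (1 : IGG).a = 0 := rfl
@[simp] theorem one_b : (1 : IGG).b = 0 := rfl
@[simp] theorem inv_m (x : IGG) : x⁻¹.m = -x.m := rfl
@[simp] theorem inv_a (x : IGG) : x⁻¹.a = -x.a := rfl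
@[simp] theorem inv_b (x : IGG) : x⁻¹.b = -x.b := rfl

instance : Group IGG :=
  Group.ofLeftAxioms
    (fun x y z => by ext <;> simp <;> ring)
    (fun x => by ext <;> simp)
    (fun x => by ext <;> simp)

end IGG

/-- Membership in the intermediate grading group `G`: triples `(m; a, b)` of
half-integers such that `a + b ∈ ℤ` and `m + ((2a+1)(a+b+1)+1)/2 ∈ ℤ`. -/
def memG (x : IGG) : Prop :=
  (∃ n : ℤ, x.m = n / 2) ∧ (∃ n : ℤ, x.a = n / 2) ∧ (∃ n : ℤ, x.b = n / 2) ∧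
  (∃ n : ℤ, x.a + x.b = (n : ℚ)) ∧
  (∃ n : ℤ, x.m + ((2 * x.a + 1) * (x.a + x.b + 1) + 1) / 2 = (n : ℚ))

/-- `λ = (1; 0, 0)`. -/
def lambdaG : IGG := ⟨1, 0, 0⟩
/-- `B_t = (½; ½, ½ − t)`, the `G`-grading of the generator `b_{p−t}` of `CFD⁻` of
the `(p,1)`-cable. -/
def Bgr (t : ℤ) : IGG := ⟨1/2, 1/2, 1/2 - (t : ℚ)⟩

lemma zpowX (l : ℤ) : (⟨1/2, 1, 0⟩ : IGG) ^ l = ⟨(l : ℚ)/2, (l : ℚ), 0⟩ := by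
  induction l using Int.induction_on with
  | zero => ext <;> simp
  | succ n ih =>
      rw [zpow_add_one, ih]
      ext <;> simp <;> push_cast <;> ring
  | pred n ih =>
      rw [zpow_sub_one, ih]
      ext <;> simp <;> push_cast <;> ring

/-- In the intermediate grading group `G`, for all integers `i, j ≥ 1`, every natural
number `k`, every integer `l`, and every `h` in the three-element set
`{(0; 0, 0), (−½; 0, 1), (−3/2; 0, −1)}`, the equation
`λ·B_j⁻¹·(−2k; 0, 0)·h·B_i·(½; 1, 0)^l = (0; 0, 0)` holds if and only if
`(h = (−½; 0, 1), i = j + 1, k = 0, l = 0)` or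
`(h = (−3/2; 0, −1), i = j − 1, k = 0, l = 0)`. (This classifies the permissible
differential terms between the generators `b_{p−j}` and `b_{p−i}` — and identically
between `c_{p−j}` and `c_{p−i}` — of the weighted type D module `CFD⁻` of the
`(p,1)`-cable: only `ρ23 ⊗ b_{p−(j+1)}` and `ρ41 ⊗ b_{p−(j−1)}` are permitted.) -/
theorem cable_grading_constraint_b_to_b :
    ∀ (i j : ℤ), 1 ≤ i → 1 ≤ j → ∀ (k : ℕ) (l : ℤ),
      ∀ h ∈ ({⟨0, 0, 0⟩, ⟨-(1/2), 0, 1⟩, ⟨-(3/2), 0, -1⟩} : Set IGG),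
        (lambdaG * (Bgr j)⁻¹ * (⟨-2 * (k : ℚ), 0, 0⟩ : IGG) * h * Bgr i *
            (⟨1/2, 1, 0⟩ : IGG) ^ l = (⟨0, 0, 0⟩ : IGG) ↔
          (h = (⟨-(1/2), 0, 1⟩ : IGG) ∧ i = j + 1 ∧ k = 0 ∧ l = 0) ∨
          (h = (⟨-(3/2), 0, -1⟩ : IGG) ∧ i = j - 1 ∧ k = 0 ∧ l = 0)) := by

  intro i j hi hj k l h hh
  simp only [Set.mem_insert_iff, Set.mem_singleton_iff] at hh
  have key : ∀ hm ha hb : ℚ, h = ⟨hm, ha, hb⟩ →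
      (lambdaG * (Bgr j)⁻¹ * (⟨-2 * (k : ℚ), 0, 0⟩ : IGG) * h * Bgr i *
          (⟨1/2, 1, 0⟩ : IGG) ^ l = (⟨0, 0, 0⟩ : IGG) ↔
        (1 - 2 * (k : ℚ) + hm - hb / 2 - ha * ((j : ℚ) - 1/2) + (l : ℚ) / 2
            + (ha - 1/2) * (1/2 - (i : ℚ)) - hb / 2 - (j : ℚ) / 2 + 1/4
            - (l : ℚ) * ((j : ℚ) + hb - (i : ℚ)) = 0 ∧
          ha + (l : ℚ) = 0 ∧ (j : ℚ) + hb - (i : ℚ) = 0)) := by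
    rintro hm ha hb rfl
    rw [zpowX]
    simp only [IGG.ext_iff, IGG.mul_m, IGG.mul_a, IGG.mul_b, IGG.inv_m, IGG.inv_a,
      IGG.inv_b, lambdaG, Bgr]
    constructor
    · rintro ⟨h1, h2, h3⟩
      refine ⟨by linear_combination h1, by linarith, by linarith⟩
    · rintro ⟨h1, h2, h3⟩
      refine ⟨by linear_combination h1, by linarith, by linarith⟩
  rcases hh with rfl | rfl | rfl
  · rw [key 0 0 0 rfl]
    constructor
    · rintro ⟨h1, h2, h3⟩
      exfalso
      have hl : l = 0 := by rw [zero_add] at h2; exact_mod_cast h2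
      subst hl
      push_cast at h1 h3
      have h2k : (2 : ℚ) * (k : ℚ) = 1 := by nlinarith [h1, h3]
      have h2k' : 2 * (k : ℤ) = 1 := by exact_mod_cast h2k
      omega
    · rintro (⟨he, _⟩ | ⟨he, _⟩) <;> norm_num [IGG.ext_iff] at he
  · rw [key (-(1/2)) 0 1 rfl]
    constructor
    · rintro ⟨h1, h2, h3⟩
      have hl : l = 0 := by rw [zero_add] at h2; exact_mod_cast h2
      subst hl
      push_cast at h1 h3
      have hij : i = j + 1 := by exact_mod_cast (show (i : ℚ) = (j : ℚ) + 1 by linarith)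
      have hk : (k : ℚ) = 0 := by nlinarith [h1, h3]
      exact Or.inl ⟨rfl, hij, by exact_mod_cast hk, rfl⟩
    · rintro (⟨he, rfl, rfl, rfl⟩ | ⟨he, _⟩)
      · push_cast
        refine ⟨by ring, by ring, by ring⟩
      · norm_num [IGG.ext_iff] at he
  · rw [key (-(3/2)) 0 (-1) rfl]
    constructor
    · rintro ⟨h1, h2, h3⟩
      have hl : l = 0 := by rw [zero_add] at h2; exact_mod_cast h2
      subst hl
      push_cast at h1 h3
      have hij : i = j - 1 := by exact_mod_cast (show (i : ℚ) = (j : ℚ) - 1 by linarith)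
      have hk : (k : ℚ) = 0 := by nlinarith [h1, h3]
      exact Or.inr ⟨rfl, hij, by exact_mod_cast hk, rfl⟩
    · rintro (⟨he, _⟩ | ⟨he, rfl, rfl, rfl⟩)
      · norm_num [IGG.ext_iff] at he
      · push_cast
        refine ⟨by ring, by ring, by ring⟩
end

section
/- In the intermediate grading group G, set B_t = (½; ½, ½ − t) and C_t = (−½; ½, ½ − t) for integers t ≥ 1. For all integers i, j ≥ 1, every natural number k, every integer l, and every h in the three-element set {(0; 0, 0), (−½; 0, 1), (−3/2; 0, −1)}, the equation λ·B_j^{−1}·(−2k; 0, 0)·h·C_i·(½; 1, 0)^l = (0; 0, 0) holds if and only if h = (0; 0, 0), i = j, k = 0, and l = 0. (This classifies the permissible differential terms from b_{p−j} to c_{p−i} in CFD⁻ of the (p,1)-cable: only the term 1 ⊗ c_{p−j} is grading-permissible.) -/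
/-- `C_t = (−½; ½, ½ − t)`, the `G`-grading of the generator `c_{p−t}` of `CFD⁻` of
the `(p,1)`-cable. -/
def Cgr (t : ℤ) : IGG := ⟨-(1/2), 1/2, 1/2 - (t : ℚ)⟩

lemma zpow_lem (l : ℤ) : (⟨1/2, 1, 0⟩ : IGG) ^ l = ⟨l / 2, l, 0⟩ := by
  induction l using Int.induction_on with
  | zero => ext <;> simp
  | succ n ih =>
      rw [zpow_add_one, ih]
      ext <;> simp <;> push_cast <;> ring
  | pred n ih =>
      rw [zpow_sub_one, ih]
      ext <;> simp <;> push_cast <;> ring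

/-- In the intermediate grading group `G`, for all integers `i, j ≥ 1`, every natural
number `k`, every integer `l`, and every `h` in the three-element set
`{(0; 0, 0), (−½; 0, 1), (−3/2; 0, −1)}`, the equation
`λ·B_j⁻¹·(−2k; 0, 0)·h·C_i·(½; 1, 0)^l = (0; 0, 0)` holds if and only if
`h = (0; 0, 0)`, `i = j`, `k = 0`, and `l = 0`. (This classifies the permissible
differential terms from `b_{p−j}` to `c_{p−i}` in `CFD⁻` of the `(p,1)`-cable: only
the term `1 ⊗ c_{p−j}` is grading-permissible.) -/
theorem cable_grading_constraint_b_to_c :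
    ∀ (i j : ℤ), 1 ≤ i → 1 ≤ j → ∀ (k : ℕ) (l : ℤ),
      ∀ h ∈ ({⟨0, 0, 0⟩, ⟨-(1/2), 0, 1⟩, ⟨-(3/2), 0, -1⟩} : Set IGG),
        (lambdaG * (Bgr j)⁻¹ * (⟨-2 * (k : ℚ), 0, 0⟩ : IGG) * h * Cgr i *
            (⟨1/2, 1, 0⟩ : IGG) ^ l = (⟨0, 0, 0⟩ : IGG) ↔
          (h = (⟨0, 0, 0⟩ : IGG) ∧ i = j ∧ k = 0 ∧ l = 0)) := by
  intro i j hi hj k l h hmem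
  rw [zpow_lem]
  rcases hmem with rfl | rfl | rfl <;>
    simp only [IGG.ext_iff, IGG.mul_m, IGG.mul_a, IGG.mul_b, IGG.inv_m, IGG.inv_a, IGG.inv_b,
      lambdaG, Bgr, Cgr] <;>
    constructor
  · rintro ⟨h1, h2, h3⟩
    have hl : l = 0 := by
      have : (l : ℚ) = 0 := by linarith
      exact_mod_cast this
    subst hl
    push_cast at h1 h3
    have hij : i = j := by
      have : (i : ℚ) = (j : ℚ) := by linarith
      exact_mod_cast this
    have hk : k = 0 := by
      have : (k : ℚ) = 0 := by linarith
      exact_mod_cast this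
    exact ⟨trivial, hij, hk, rfl⟩
  · rintro ⟨-, rfl, rfl, rfl⟩
    push_cast
    refine ⟨by ring, by ring, by ring⟩
  · rintro ⟨h1, h2, h3⟩
    exfalso
    have hl : l = 0 := by
      have : (l : ℚ) = 0 := by linarith
      exact_mod_cast this
    subst hl
    push_cast at h1 h3
    have hk : (0 : ℚ) ≤ (k : ℚ) := by positivity
    linarith
  · rintro ⟨heq, -⟩
    exact absurd heq (by simp)
  · rintro ⟨h1, h2, h3⟩
    exfalso
    have hl : l = 0 := by
      have : (l : ℚ) = 0 := by linarith
      exact_mod_cast this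
    subst hl
    push_cast at h1 h3
    have hk : (0 : ℚ) ≤ (k : ℚ) := by positivity
    linarith
  · rintro ⟨heq, -⟩
    exact absurd heq (by simp)
end
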